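/- arXiv:2412.16564 — 2 statements merged into one kernel-verified Lean document; each statement's English description precedes it below -/
import Mathlib

section
/- Let l ≥ 1 and m ≥ 1 be natural numbers, τ > 0, t ∈ ℝ, and let ξ : ℝ → ℝ be (l+1)-times continuously differentiable on the interval [t − lτ, t + mτ]. For each p ∈ {1, …, l+1}, let B_p ≥ 0 satisfy |ξ^{(p)}(s)| ≤ B_p for all s ∈ [t − lτ, t + mτ]. Let P̄_l(s) = ξ(t) + Σ_{p=1}^{l} (∇^p_τ ξ(t)/p!)(s−t)^p be the approximated Taylor polynomial of degree l at t. Then |ξ(t + mτ) − P̄_l(t + mτ)| ≤ (B_{l+1} / (l+1)!) · (mτ)^{l+1} + Σ_{p=1}^{l} ((mτ)^p / p!) · (τ · B_{p+1} / (p+1)!) · Σ_{j=1}^{p} (p choose j) · j^{p+1}. -/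
/-- The backward-difference approximation of the `p`-th derivative of `ξ` at `t`
with step size `τ`: `∇^p_τ ξ(t) = τ^{-p} · Σ_{j=0}^{p} (-1)^j (p choose j) ξ(t - jτ)`. -/
noncomputable def bdApprox (ξ : ℝ → ℝ) (τ : ℝ) (p : ℕ) (t : ℝ) : ℝ :=
  τ ^ (-(p : ℤ)) *
    ∑ j ∈ Finset.range (p + 1), (-1 : ℝ) ^ j * (p.choose j : ℝ) * ξ (t - j * τ)


open Set in

private def altS (p k : ℕ) : ℝ := ∑ j ∈ Finset.range (p+1), (-1:ℝ)^j * (p.choose j) * (j:ℝ)^k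

private lemma altS_recur (p k : ℕ) :
    altS (p+1) k = altS p k - ∑ m ∈ Finset.range (k+1), (k.choose m : ℝ) * altS p m := by
  have h1 : altS (p+1) k - altS p k
      = ∑ j ∈ Finset.range (p+2), (-1:ℝ)^j * ((p+1).choose j - (p.choose j : ℝ)) * (j:ℝ)^k := by
    unfold altS
    have hext : ∑ j ∈ Finset.range (p+1), (-1:ℝ)^j * (p.choose j) * (j:ℝ)^k
        = ∑ j ∈ Finset.range (p+2), (-1:ℝ)^j * (p.choose j) * (j:ℝ)^k := by
      rw [eq_comm, Finset.sum_range_succ]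
      simp [Nat.choose_succ_self]
    rw [hext, ← Finset.sum_sub_distrib]
    congr 1; ext j; ring
  have h2 : ∑ j ∈ Finset.range (p+2), (-1:ℝ)^j * ((p+1).choose j - (p.choose j : ℝ)) * (j:ℝ)^k
      = ∑ i ∈ Finset.range (p+1), (-1:ℝ)^(i+1) * (p.choose i : ℝ) * ((i:ℝ)+1)^k := by
    rw [Finset.sum_range_succ' (n := p+1)]
    simp only [Nat.choose_zero_right, Nat.cast_one, sub_self, mul_zero, zero_mul, add_zero]
    apply Finset.sum_congr rfl
    intro i _
    have : ((p+1).choose (i+1) : ℝ) - (p.choose (i+1) : ℝ) = (p.choose i : ℝ) := by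
      rw [Nat.choose_succ_succ]; push_cast; ring
    rw [this]
    push_cast
    ring
  have h3 : ∀ i : ℕ, ((i:ℝ)+1)^k = ∑ m ∈ Finset.range (k+1), (k.choose m : ℝ) * (i:ℝ)^m := by
    intro i
    rw [add_pow]
    apply Finset.sum_congr rfl
    intro m _
    simp [mul_comm]
  have h4 : ∑ i ∈ Finset.range (p+1), (-1:ℝ)^(i+1) * (p.choose i : ℝ) * ((i:ℝ)+1)^k
      = - ∑ m ∈ Finset.range (k+1), (k.choose m : ℝ) * altS p m := by
    simp only [h3, Finset.mul_sum]
    rw [Finset.sum_comm]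
    rw [← Finset.sum_neg_distrib]
    apply Finset.sum_congr rfl
    intro m _
    unfold altS
    rw [Finset.mul_sum, ← Finset.sum_neg_distrib]
    apply Finset.sum_congr rfl
    intro i _
    ring
  have := h1.trans (h2.trans h4)
  linarith

private lemma altS_eval : ∀ p k : ℕ, k ≤ p →
    altS p k = if k = p then (-1:ℝ)^p * p.factorial else 0 := by
  intro p
  induction p with
  | zero => intro k hk; interval_cases k; simp [altS]
  | succ p IH =>
    intro k hk
    rw [altS_recur]
    rcases eq_or_lt_of_le hk with rfl | hk'
    · -- k = p+1
      rw [Finset.sum_range_succ, Nat.choose_self, Nat.cast_one, one_mul,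
        Finset.sum_range_succ]
      have hp : altS p p = (-1:ℝ)^p * p.factorial := by simpa using IH p le_rfl
      have hz : ∀ m ∈ Finset.range p, ((p+1).choose m : ℝ) * altS p m = 0 := by
        intro m hm
        rw [IH m (Finset.mem_range.mp hm).le, if_neg (Finset.mem_range.mp hm).ne, mul_zero]
      rw [Finset.sum_eq_zero hz, if_pos rfl, hp]
      simp [Nat.choose_succ_self_right, Nat.factorial_succ]
      push_cast
      ring
    · -- k ≤ p
      have hk2 : k ≤ p := Nat.lt_succ_iff.mp hk'
      rw [if_neg (by omega)]
      rcases eq_or_lt_of_le hk2 with rfl | hk3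
      · rw [Finset.sum_range_succ, Nat.choose_self, Nat.cast_one, one_mul]
        have hz : ∀ m ∈ Finset.range k, (k.choose m : ℝ) * altS k m = 0 := by
          intro m hm
          rw [IH m (Finset.mem_range.mp hm).le, if_neg (Finset.mem_range.mp hm).ne, mul_zero]
        rw [Finset.sum_eq_zero hz]; ring
      · have hz : ∀ m ∈ Finset.range (k+1), (k.choose m : ℝ) * altS p m = 0 := by
          intro m hm
          have hm' : m ≤ k := Nat.lt_succ_iff.mp (Finset.mem_range.mp hm)
          rw [IH m (hm'.trans hk2), if_neg (by omega), mul_zero]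
        rw [Finset.sum_eq_zero hz, IH k hk2, if_neg (by omega)]; ring

open Set in

private lemma iterDW_subset {f : ℝ → ℝ} {s t : Set ℝ} (hst : s ⊆ t)
    (hs : UniqueDiffOn ℝ s) (ht : UniqueDiffOn ℝ t) {n N : ℕ} (hN : n ≤ N)
    (hf : ContDiffOn ℝ (N : ℕ∞) f t) {x : ℝ} (hx : x ∈ s) :
    iteratedDerivWithin n f s x = iteratedDerivWithin n f t x := by
  have H := hf.ftaylorSeriesWithin ht
  have h1 := (H.mono hst).eq_iteratedFDerivWithin_of_uniqueDiffOn
    (by exact_mod_cast hN) hs hx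
  have h2 := H.eq_iteratedFDerivWithin_of_uniqueDiffOn (by exact_mod_cast hN) ht (hst hx)
  simp only [iteratedDerivWithin_eq_iteratedFDerivWithin, ← h1, ← h2]

private lemma taylor_bound_right {f : ℝ → ℝ} {a b C x₀ x : ℝ} {n : ℕ} (hab : a < b)
    (hf : ContDiffOn ℝ (n + 1 : ℕ) f (Set.Icc a b)) (hx₀ : x₀ ∈ Set.Icc a b)
    (hx : x ∈ Set.Icc a b) (hle : x₀ ≤ x)
    (hC : ∀ y ∈ Set.Icc a b, |iteratedDerivWithin (n+1) f (Set.Icc a b) y| ≤ C) :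
    |f x - taylorWithinEval f n (Set.Icc a b) x₀ x|
      ≤ C * (x - x₀) ^ (n+1) / (n+1).factorial := by
  rcases eq_or_lt_of_le hle with rfl | hlt
  · simp [taylorWithinEval_self]
  have hsub : Set.Icc x₀ x ⊆ Set.Icc a b := Set.Icc_subset_Icc hx₀.1 hx.2
  have hfn : ContDiffOn ℝ (n : ℕ) f (Set.Icc x₀ x) :=
    (hf.of_le (by exact_mod_cast Nat.le_succ n)).mono hsub
  have hf' : DifferentiableOn ℝ (iteratedDerivWithin n f (Set.Icc x₀ x)) (Set.Ioo x₀ x) :=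
    ((hf.mono hsub).differentiableOn_iteratedDerivWithin
      (by exact_mod_cast n.lt_succ_self) (uniqueDiffOn_Icc hlt)).mono Set.Ioo_subset_Icc_self
  have hfn' : ContDiffOn ℝ n f (Set.uIcc x₀ x) := by rw [Set.uIcc_of_le hle]; exact hfn
  have hf'' : DifferentiableOn ℝ (iteratedDerivWithin n f (Set.uIcc x₀ x)) (Set.uIoo x₀ x) := by
    rw [Set.uIcc_of_le hle, Set.uIoo_of_le hle]; exact hf'
  obtain ⟨x', hx', heq⟩ := taylor_mean_remainder_lagrange hlt.ne hfn' hf''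
  rw [Set.uIcc_of_le hle] at heq; rw [Set.uIoo_of_le hle] at hx'
  have hTP : taylorWithinEval f n (Set.Icc x₀ x) x₀ x
      = taylorWithinEval f n (Set.Icc a b) x₀ x := by
    rw [taylor_within_apply, taylor_within_apply]
    refine Finset.sum_congr rfl fun k hk => ?_
    rw [iterDW_subset hsub (uniqueDiffOn_Icc hlt) (uniqueDiffOn_Icc hab)
      ((Nat.lt_succ_iff.mp (Finset.mem_range.mp hk)).trans (Nat.le_succ n)) hf
      (Set.left_mem_Icc.mpr hlt.le)]
  rw [← hTP, heq]
  have hd : iteratedDerivWithin (n+1) f (Set.Icc x₀ x) x'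
      = iteratedDerivWithin (n+1) f (Set.Icc a b) x' := by
    exact iterDW_subset hsub (uniqueDiffOn_Icc hlt) (uniqueDiffOn_Icc hab) le_rfl hf
      (Set.Ioo_subset_Icc_self hx')
  rw [abs_div, abs_mul, abs_pow, Nat.abs_cast, hd]
  have h1 : |x - x₀| = x - x₀ := abs_of_nonneg (by linarith)
  rw [h1]
  have hmul : |iteratedDerivWithin (n+1) f (Set.Icc a b) x'| * (x - x₀)^(n+1)
      ≤ C * (x - x₀)^(n+1) :=
    mul_le_mul_of_nonneg_right (hC x' (hsub (Set.Ioo_subset_Icc_self hx')))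
      (pow_nonneg (by linarith) _)
  have hfac : (0:ℝ) < ((n+1).factorial : ℝ) := by positivity
  exact div_le_div_of_nonneg_right hmul hfac.le

private lemma reflect_mem {a b x : ℝ} (hx : x ∈ Set.Icc a b) : a + b - x ∈ Set.Icc a b :=
  ⟨by linarith [hx.2], by linarith [hx.1]⟩

private lemma iterDW_reflect {f : ℝ → ℝ} {a b : ℝ} (hab : a < b) {N : ℕ}
    (hf : ContDiffOn ℝ (N : ℕ∞) f (Set.Icc a b)) :
    ∀ n ≤ N, ∀ x ∈ Set.Icc a b,
      iteratedDerivWithin n (fun u => f (a + b - u)) (Set.Icc a b) x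
        = (-1 : ℝ)^n * iteratedDerivWithin n f (Set.Icc a b) (a + b - x) := by
  intro n
  induction n with
  | zero => intro _ x hx; simp
  | succ n IH =>
    intro hn x hx
    have hUD := uniqueDiffOn_Icc hab
    rw [iteratedDerivWithin_succ]
    have hcongr : Set.EqOn (iteratedDerivWithin n (fun u => f (a + b - u)) (Set.Icc a b))
        (fun u => (-1 : ℝ)^n * iteratedDerivWithin n f (Set.Icc a b) (a + b - u))
        (Set.Icc a b) := fun u hu => IH (Nat.le_of_succ_le hn) u hu
    rw [derivWithin_congr hcongr (hcongr hx)]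
    -- now compute derivWithin of u ↦ (-1)^n * F (a+b-u)
    have hdiff : DifferentiableOn ℝ (iteratedDerivWithin n f (Set.Icc a b)) (Set.Icc a b) :=
      hf.differentiableOn_iteratedDerivWithin (by exact_mod_cast hn) hUD
    have hF : HasDerivWithinAt (iteratedDerivWithin n f (Set.Icc a b))
        (iteratedDerivWithin (n+1) f (Set.Icc a b) (a + b - x)) (Set.Icc a b) (a + b - x) := by
      have := (hdiff (a + b - x) (reflect_mem hx)).hasDerivWithinAt
      rwa [iteratedDerivWithin_succ]
    have hinner : HasDerivWithinAt (fun u : ℝ => a + b - u) (-1 : ℝ) (Set.Icc a b) x := by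
      simpa using ((hasDerivWithinAt_id x (Set.Icc a b)).const_sub (a + b))
    have hcomp := (hF.comp x hinner (fun u hu => reflect_mem hu)).const_mul ((-1 : ℝ)^n)
    have hcomp' : HasDerivWithinAt
        (fun u => (-1 : ℝ)^n * iteratedDerivWithin n f (Set.Icc a b) (a + b - u))
        ((-1 : ℝ)^n * (iteratedDerivWithin (n+1) f (Set.Icc a b) (a + b - x) * -1))
        (Set.Icc a b) x := hcomp
    rw [hcomp'.derivWithin (hUD x hx)]
    ring

private lemma taylor_bound_left {f : ℝ → ℝ} {a b C x₀ x : ℝ} {n : ℕ} (hab : a < b)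
    (hf : ContDiffOn ℝ (n + 1 : ℕ) f (Set.Icc a b)) (hx₀ : x₀ ∈ Set.Icc a b)
    (hx : x ∈ Set.Icc a b) (hle : x ≤ x₀)
    (hC : ∀ y ∈ Set.Icc a b, |iteratedDerivWithin (n+1) f (Set.Icc a b) y| ≤ C) :
    |f x - taylorWithinEval f n (Set.Icc a b) x₀ x|
      ≤ C * (x₀ - x) ^ (n+1) / (n+1).factorial := by
  set g : ℝ → ℝ := fun u => f (a + b - u) with hg_def
  have hg : ContDiffOn ℝ (n + 1 : ℕ) g (Set.Icc a b) := by
    have := hf.comp ((contDiff_const.sub contDiff_id).contDiffOn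
      (s := Set.Icc a b)) (fun u hu => reflect_mem hu)
    simpa [hg_def, Function.comp_def] using this
  have hfN : ContDiffOn ℝ ((n + 1 : ℕ) : ℕ∞) f (Set.Icc a b) := hf
  have hCg : ∀ y ∈ Set.Icc a b, |iteratedDerivWithin (n+1) g (Set.Icc a b) y| ≤ C := by
    intro y hy
    rw [hg_def, iterDW_reflect hab hfN (n+1) le_rfl y hy, abs_mul, abs_pow, abs_neg, abs_one,
      one_pow, one_mul]
    exact hC _ (reflect_mem hy)
  have hres := taylor_bound_right hab hg (reflect_mem hx₀) (reflect_mem hx)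
    (by linarith) hCg
  have e1 : g (a + b - x) = f x := by rw [hg_def]; norm_num
  have e2 : (a + b - x) - (a + b - x₀) = x₀ - x := by ring
  have e3 : taylorWithinEval g n (Set.Icc a b) (a + b - x₀) (a + b - x)
      = taylorWithinEval f n (Set.Icc a b) x₀ x := by
    rw [taylor_within_apply, taylor_within_apply]
    refine Finset.sum_congr rfl fun k hk => ?_
    have hk' : k ≤ n + 1 := (Nat.lt_succ_iff.mp (Finset.mem_range.mp hk)).trans (Nat.le_succ n)
    rw [hg_def, iterDW_reflect hab hfN k hk' _ (reflect_mem hx₀)]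
    have e4 : a + b - (a + b - x₀) = x₀ := by ring
    rw [e4, smul_eq_mul, smul_eq_mul, e2]
    have e5 : (x - x₀) = -(x₀ - x) := by ring
    rw [e5, neg_pow (x₀ - x) k]
    ring
  rw [e1, e2, e3] at hres
  exact hres

private lemma taylor_bound_two {f : ℝ → ℝ} {a b C x₀ x : ℝ} {n : ℕ} (hab : a < b)
    (hf : ContDiffOn ℝ (n + 1 : ℕ) f (Set.Icc a b)) (hx₀ : x₀ ∈ Set.Icc a b)
    (hx : x ∈ Set.Icc a b)
    (hC : ∀ y ∈ Set.Icc a b, |iteratedDerivWithin (n+1) f (Set.Icc a b) y| ≤ C) :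
    |f x - taylorWithinEval f n (Set.Icc a b) x₀ x|
      ≤ C * |x - x₀| ^ (n+1) / (n+1).factorial := by
  rcases le_total x₀ x with h | h
  · rw [abs_of_nonneg (sub_nonneg.mpr h)]
    exact taylor_bound_right hab hf hx₀ hx h hC
  · rw [abs_of_nonpos (sub_nonpos.mpr h), neg_sub]
    exact taylor_bound_left hab hf hx₀ hx h hC

private lemma sum_split (h : ℕ → ℝ) (p : ℕ) :
    ∑ j ∈ Finset.range (p+1), h j = h 0 + ∑ j ∈ Finset.Icc 1 p, h j := by
  rw [Finset.sum_range_succ']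
  have : Finset.Icc 1 p = Finset.Ico 1 (p+1) := by rw [Finset.Ico_add_one_right_eq_Icc]
  rw [this, Finset.sum_Ico_eq_sum_range]
  simp only [Nat.add_sub_cancel]
  rw [add_comm]
  congr 1
  exact Finset.sum_congr rfl fun i _ => by rw [add_comm]

open Set in
private lemma bd_error (l m : ℕ) (τ t : ℝ) (ξ : ℝ → ℝ) (hl : 1 ≤ l) (hm : 1 ≤ m) (hτ : 0 < τ)
    (hξ : ContDiffOn ℝ ((l + 1 : ℕ) : ℕ∞) ξ (Set.Icc (t - l * τ) (t + m * τ)))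
    (B : ℕ → ℝ)
    (hbound : ∀ p ∈ Finset.Icc 1 (l + 1), ∀ s ∈ Set.Icc (t - l * τ) (t + m * τ),
      |iteratedDerivWithin p ξ (Set.Icc (t - l * τ) (t + m * τ)) s| ≤ B p)
    (p : ℕ) (hp : p ∈ Finset.Icc 1 l) :
    |iteratedDerivWithin p ξ (Set.Icc (t - l * τ) (t + m * τ)) t - bdApprox ξ τ p t|
      ≤ τ * B (p + 1) / ((p + 1).factorial : ℝ) *
          ∑ j ∈ Finset.Icc 1 p, (p.choose j : ℝ) * (j : ℝ) ^ (p + 1) := by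
  obtain ⟨hp1, hpl⟩ := Finset.mem_Icc.mp hp
  set a : ℝ := t - l * τ with ha_def
  set b : ℝ := t + m * τ with hb_def
  have hl0 : (1:ℝ) ≤ l := by exact_mod_cast hl
  have hm0 : (1:ℝ) ≤ m := by exact_mod_cast hm
  have hlτ : 0 < (l:ℝ) * τ := by nlinarith
  have hmτ : 0 < (m:ℝ) * τ := by nlinarith
  have hab : a < b := by rw [ha_def, hb_def]; linarith
  have ht : t ∈ Set.Icc a b := ⟨by rw [ha_def]; linarith, by rw [hb_def]; linarith⟩
  have hcd : ContDiffOn ℝ ((p + 1 : ℕ) : ℕ∞) ξ (Set.Icc a b) :=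
    hξ.of_le (by exact_mod_cast Nat.cast_le.mpr (Nat.succ_le_succ hpl))
  have hmemj : ∀ j : ℕ, j ≤ p → t - j * τ ∈ Set.Icc a b := by
    intro j hj
    have hjl : (j:ℝ) ≤ l := by exact_mod_cast hj.trans hpl
    have hj0 : (0:ℝ) ≤ j := Nat.cast_nonneg j
    constructor
    · rw [ha_def]; nlinarith
    · rw [hb_def]; nlinarith
  have hmem_p1 : (p+1) ∈ Finset.Icc 1 (l+1) :=
    Finset.mem_Icc.mpr ⟨Nat.le_add_left 1 p, Nat.succ_le_succ hpl⟩
  have hC := hbound (p+1) hmem_p1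
  set D : ℕ → ℝ := fun k => iteratedDerivWithin k ξ (Set.Icc a b) t with hD_def
  set T : ℕ → ℝ := fun j => taylorWithinEval ξ p (Set.Icc a b) t (t - j * τ) with hT_def
  set R : ℕ → ℝ := fun j => ξ (t - j * τ) - T j with hR_def
  have hτp : (τ:ℝ)^p ≠ 0 := pow_ne_zero p hτ.ne'
  have hfacp1 : ((p+1).factorial : ℝ) ≠ 0 := by positivity
  -- remainder bounds
  have hR_bd : ∀ j ∈ Finset.range (p+1),
      |R j| ≤ B (p+1) * ((j:ℝ) * τ)^(p+1) / ((p+1).factorial : ℝ) := by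
    intro j hj
    have hj' : j ≤ p := Nat.lt_succ_iff.mp (Finset.mem_range.mp hj)
    have hj0 : (0:ℝ) ≤ (j:ℝ) * τ := mul_nonneg (Nat.cast_nonneg j) hτ.le
    have h1 := taylor_bound_left (n := p) hab hcd ht (hmemj j hj')
      (by linarith : t - (j:ℝ) * τ ≤ t) hC
    have e : t - (t - (j:ℝ) * τ) = (j:ℝ) * τ := by ring
    rw [e] at h1
    exact h1
  -- Taylor polynomial expansion
  have hT_exp : ∀ j : ℕ, T j = ∑ k ∈ Finset.range (p+1),
      (-1:ℝ)^k * ((k.factorial : ℝ))⁻¹ * τ^k * (j:ℝ)^k * D k := by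
    intro j
    rw [hT_def]
    simp only
    rw [taylor_within_apply]
    refine Finset.sum_congr rfl fun k _ => ?_
    rw [smul_eq_mul]
    rw [show t - (j:ℝ) * τ - t = (-1) * τ * (j:ℝ) by ring, mul_pow, mul_pow]
    rw [hD_def]
    ring
  -- main cancellation
  have hmain : (∑ j ∈ Finset.range (p+1), (-1:ℝ)^j * (p.choose j : ℝ) * T j)
      = τ^p * D p := by
    have h1 : ∀ j ∈ Finset.range (p+1), (-1:ℝ)^j * (p.choose j : ℝ) * T j
        = ∑ k ∈ Finset.range (p+1),
            ((-1:ℝ)^k * ((k.factorial : ℝ))⁻¹ * τ^k * D k) * ((-1:ℝ)^j * (p.choose j : ℝ) * (j:ℝ)^k) := by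
      intro j _
      rw [hT_exp j, Finset.mul_sum]
      exact Finset.sum_congr rfl fun k _ => by ring
    rw [Finset.sum_congr rfl h1, Finset.sum_comm]
    have h2 : ∀ k ∈ Finset.range (p+1),
        ∑ j ∈ Finset.range (p+1),
            ((-1:ℝ)^k * ((k.factorial : ℝ))⁻¹ * τ^k * D k) * ((-1:ℝ)^j * (p.choose j : ℝ) * (j:ℝ)^k)
        = ((-1:ℝ)^k * ((k.factorial : ℝ))⁻¹ * τ^k * D k) * altS p k := by
      intro k _
      rw [← Finset.mul_sum, altS]
    rw [Finset.sum_congr rfl h2]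
    have h3 : ∀ k ∈ Finset.range (p+1),
        ((-1:ℝ)^k * ((k.factorial : ℝ))⁻¹ * τ^k * D k) * altS p k
        = if k = p then τ^p * D p else 0 := by
      intro k hk
      have hk' : k ≤ p := Nat.lt_succ_iff.mp (Finset.mem_range.mp hk)
      rw [altS_eval p k hk']
      by_cases hkp : k = p
      · subst hkp
        rw [if_pos rfl, if_pos rfl]
        have hfac : ((k.factorial : ℝ)) ≠ 0 := by positivity
        have hsq : (-1:ℝ)^k * (-1:ℝ)^k = 1 := by
          rw [← mul_pow]; norm_num
        calc (-1:ℝ)^k * ((k.factorial : ℝ))⁻¹ * τ^k * D k * ((-1:ℝ)^k * (k.factorial : ℝ))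
            = ((-1:ℝ)^k * (-1:ℝ)^k) * (((k.factorial : ℝ))⁻¹ * (k.factorial : ℝ)) * (τ^k * D k) := by
              ring
          _ = τ^k * D k := by rw [hsq, inv_mul_cancel₀ hfac]; ring
      · rw [if_neg hkp, if_neg hkp, mul_zero]
    rw [Finset.sum_congr rfl h3, Finset.sum_ite_eq' (Finset.range (p+1)) p (fun _ => τ^p * D p),
      if_pos (Finset.self_mem_range_succ p)]
  -- decomposition of bdApprox
  have hdecomp : bdApprox ξ τ p t
      = D p + τ ^ (-(p:ℤ)) * ∑ j ∈ Finset.range (p+1), (-1:ℝ)^j * (p.choose j : ℝ) * R j := by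
    rw [bdApprox]
    have h1 : ∀ j ∈ Finset.range (p+1), (-1:ℝ)^j * (p.choose j : ℝ) * ξ (t - j * τ)
        = (-1:ℝ)^j * (p.choose j : ℝ) * T j + (-1:ℝ)^j * (p.choose j : ℝ) * R j := by
      intro j _
      rw [hR_def]
      simp only
      ring
    rw [Finset.sum_congr rfl h1, Finset.sum_add_distrib, mul_add, hmain]
    have hz : τ ^ (-(p:ℤ)) * (τ^p * D p) = D p := by
      rw [zpow_neg, zpow_natCast, ← mul_assoc, inv_mul_cancel₀ hτp, one_mul]
    rw [hz]
  -- final estimate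
  rw [hdecomp]
  rw [show D p - (D p + τ ^ (-(p:ℤ)) * ∑ j ∈ Finset.range (p+1), (-1:ℝ)^j * (p.choose j : ℝ) * R j)
      = -(τ ^ (-(p:ℤ)) * ∑ j ∈ Finset.range (p+1), (-1:ℝ)^j * (p.choose j : ℝ) * R j) by ring]
  rw [abs_neg, abs_mul]
  have habs_z : |τ ^ (-(p:ℤ))| = (τ^p)⁻¹ := by
    rw [zpow_neg, zpow_natCast, abs_inv, abs_of_pos (pow_pos hτ p)]
  rw [habs_z]
  have hsum_bd : |∑ j ∈ Finset.range (p+1), (-1:ℝ)^j * (p.choose j : ℝ) * R j|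
      ≤ ∑ j ∈ Finset.range (p+1), (p.choose j : ℝ) * (B (p+1) * ((j:ℝ) * τ)^(p+1) / ((p+1).factorial : ℝ)) := by
    refine (Finset.abs_sum_le_sum_abs _ _).trans (Finset.sum_le_sum fun j hj => ?_)
    rw [abs_mul, abs_mul, abs_pow, abs_neg, abs_one, one_pow, one_mul, Nat.abs_cast]
    exact mul_le_mul_of_nonneg_left (hR_bd j hj) (Nat.cast_nonneg _)
  have hkey : (τ^p)⁻¹ * ∑ j ∈ Finset.range (p+1),
        (p.choose j : ℝ) * (B (p+1) * ((j:ℝ) * τ)^(p+1) / ((p+1).factorial : ℝ))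
      = τ * B (p+1) / ((p+1).factorial : ℝ) *
          ∑ j ∈ Finset.Icc 1 p, (p.choose j : ℝ) * (j : ℝ) ^ (p + 1) := by
    rw [sum_split (fun j => (p.choose j : ℝ) * (B (p+1) * ((j:ℝ) * τ)^(p+1) / ((p+1).factorial : ℝ))) p]
    simp only [Nat.cast_zero, zero_mul, zero_pow (Nat.succ_ne_zero p), mul_zero, zero_div,
      zero_add, Nat.cast_ofNat]
    rw [Finset.mul_sum, Finset.mul_sum]
    refine Finset.sum_congr rfl fun j _ => ?_
    rw [mul_pow, pow_succ τ p]
    field_simp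
  calc (τ^p)⁻¹ * |∑ j ∈ Finset.range (p+1), (-1:ℝ)^j * (p.choose j : ℝ) * R j|
      ≤ (τ^p)⁻¹ * ∑ j ∈ Finset.range (p+1),
          (p.choose j : ℝ) * (B (p+1) * ((j:ℝ) * τ)^(p+1) / ((p+1).factorial : ℝ)) :=
        mul_le_mul_of_nonneg_left hsum_bd (by positivity)
    _ = _ := hkey

/-- Fully explicit, non-asymptotic form of the paper's prediction error bound
(Theorem 2), for the prediction `P̄_l(t + mτ)` made by the approximated Taylor
polynomial of degree `l` built from backward differences at `t`. -/
theorem prediction_error_bound_explicit (l m : ℕ) (hl : 1 ≤ l) (hm : 1 ≤ m)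
    (τ : ℝ) (hτ : 0 < τ) (t : ℝ) (ξ : ℝ → ℝ)
    (hξ : ContDiffOn ℝ (l + 1) ξ (Set.Icc (t - l * τ) (t + m * τ)))
    (B : ℕ → ℝ) (hB : ∀ p ∈ Finset.Icc 1 (l + 1), 0 ≤ B p)
    (hbound : ∀ p ∈ Finset.Icc 1 (l + 1), ∀ s ∈ Set.Icc (t - l * τ) (t + m * τ),
      |iteratedDerivWithin p ξ (Set.Icc (t - l * τ) (t + m * τ)) s| ≤ B p) :
    |ξ (t + m * τ)
        - (ξ t + ∑ p ∈ Finset.Icc 1 l,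
            bdApprox ξ τ p t / (p.factorial : ℝ) * ((m : ℝ) * τ) ^ p)|
      ≤ B (l + 1) / ((l + 1).factorial : ℝ) * ((m : ℝ) * τ) ^ (l + 1)
        + ∑ p ∈ Finset.Icc 1 l,
            ((m : ℝ) * τ) ^ p / (p.factorial : ℝ) *
              (τ * B (p + 1) / ((p + 1).factorial : ℝ) *
                ∑ j ∈ Finset.Icc 1 p, (p.choose j : ℝ) * (j : ℝ) ^ (p + 1)) := by
  have hξ' : ContDiffOn ℝ ((l + 1 : ℕ) : ℕ∞) ξ (Set.Icc (t - l * τ) (t + m * τ)) := by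
    exact_mod_cast hξ
  have hl0 : (1:ℝ) ≤ l := by exact_mod_cast hl
  have hm0 : (1:ℝ) ≤ m := by exact_mod_cast hm
  have hlτ : 0 < (l:ℝ) * τ := by nlinarith
  have hmτ : 0 < (m:ℝ) * τ := by nlinarith
  have hab : t - (l:ℝ) * τ < t + (m:ℝ) * τ := by linarith
  have ht : t ∈ Set.Icc (t - (l:ℝ) * τ) (t + (m:ℝ) * τ) := ⟨by linarith, by linarith⟩
  have hb_mem : t + (m:ℝ) * τ ∈ Set.Icc (t - (l:ℝ) * τ) (t + (m:ℝ) * τ) :=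
    ⟨by linarith, le_refl _⟩
  have hmem_l1 : (l+1) ∈ Finset.Icc 1 (l+1) :=
    Finset.mem_Icc.mpr ⟨Nat.le_add_left 1 l, le_refl _⟩
  set D : ℕ → ℝ := fun k => iteratedDerivWithin k ξ (Set.Icc (t - l * τ) (t + m * τ)) t
    with hD_def
  -- main Taylor remainder bound
  have hmain := taylor_bound_right (n := l) hab hξ' ht hb_mem (by linarith)
    (hbound (l+1) hmem_l1)
  rw [show t + (m:ℝ) * τ - t = (m:ℝ) * τ by ring] at hmain
  -- Taylor polynomial in explicit form
  have hT_eq : taylorWithinEval ξ l (Set.Icc (t - l * τ) (t + m * τ)) t (t + m * τ)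
      = ξ t + ∑ p ∈ Finset.Icc 1 l, D p / (p.factorial : ℝ) * ((m:ℝ) * τ) ^ p := by
    rw [taylor_within_apply]
    have h1 : ∀ k ∈ Finset.range (l+1),
        (((k.factorial : ℝ))⁻¹ * (t + (m:ℝ) * τ - t)^k) • iteratedDerivWithin k ξ
            (Set.Icc (t - l * τ) (t + m * τ)) t
        = D k / (k.factorial : ℝ) * ((m:ℝ) * τ) ^ k := by
      intro k _
      rw [smul_eq_mul, show t + (m:ℝ) * τ - t = (m:ℝ) * τ by ring, hD_def]
      ring
    rw [Finset.sum_congr rfl h1,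
      sum_split (fun k => D k / (k.factorial : ℝ) * ((m:ℝ) * τ) ^ k) l]
    congr 1
    simp [hD_def]
  -- decomposition
  have hsum : ∑ p ∈ Finset.Icc 1 l, (D p - bdApprox ξ τ p t) / (p.factorial : ℝ) * ((m:ℝ) * τ) ^ p
      = (∑ p ∈ Finset.Icc 1 l, D p / (p.factorial : ℝ) * ((m:ℝ) * τ) ^ p)
        - ∑ p ∈ Finset.Icc 1 l, bdApprox ξ τ p t / (p.factorial : ℝ) * ((m:ℝ) * τ) ^ p := by
    rw [← Finset.sum_sub_distrib]
    exact Finset.sum_congr rfl fun p _ => by ring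
  have hdecomp : ξ (t + m * τ)
        - (ξ t + ∑ p ∈ Finset.Icc 1 l, bdApprox ξ τ p t / (p.factorial : ℝ) * ((m:ℝ) * τ) ^ p)
      = (ξ (t + m * τ) - taylorWithinEval ξ l (Set.Icc (t - l * τ) (t + m * τ)) t (t + m * τ))
        + ∑ p ∈ Finset.Icc 1 l, (D p - bdApprox ξ τ p t) / (p.factorial : ℝ) * ((m:ℝ) * τ) ^ p := by
    rw [hT_eq, hsum]
    ring
  rw [hdecomp]
  refine (abs_add_le _ _).trans (add_le_add ?_ ?_)
  · refine hmain.trans ?_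
    rw [div_eq_mul_inv, div_eq_mul_inv]
    ring_nf
    exact le_refl _
  · refine (Finset.abs_sum_le_sum_abs _ _).trans (Finset.sum_le_sum fun p hp => ?_)
    have hbd := bd_error l m τ t ξ hl hm hτ hξ' B hbound p hp
    have hfac : (0:ℝ) < (p.factorial : ℝ) := by positivity
    have hpow : (0:ℝ) ≤ ((m:ℝ) * τ) ^ p := pow_nonneg hmτ.le p
    rw [abs_mul, abs_div, abs_pow, abs_of_pos hmτ, Nat.abs_cast]
    calc |D p - bdApprox ξ τ p t| / (p.factorial : ℝ) * ((m:ℝ) * τ) ^ p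
        ≤ (τ * B (p + 1) / ((p + 1).factorial : ℝ) *
            ∑ j ∈ Finset.Icc 1 p, (p.choose j : ℝ) * (j : ℝ) ^ (p + 1)) / (p.factorial : ℝ)
            * ((m:ℝ) * τ) ^ p := by
          gcongr
      _ = ((m:ℝ) * τ) ^ p / (p.factorial : ℝ) *
            (τ * B (p + 1) / ((p + 1).factorial : ℝ) *
              ∑ j ∈ Finset.Icc 1 p, (p.choose j : ℝ) * (j : ℝ) ^ (p + 1)) := by
          ring
end

section
/- Let l ≥ 1 and m ≥ 1 be natural numbers, t ∈ ℝ, and let τ₀ > 0 satisfy m·τ₀ ≤ 1. Let ξ : ℝ → ℝ be (l+2)-times continuously differentiable on [t − lτ₀, t + mτ₀], and let B ≥ 0 satisfy |ξ^{(l+1)}(s)| ≤ B for all s ∈ [t, t + mτ₀]. Then there exists a constant C ≥ 0 such that for all τ ∈ (0, τ₀], |ξ(t + mτ) − P̄_l(t + mτ)| ≤ (B / (l+1)!) · (mτ)^{l+1} + τ · Σ_{p=1}^{l} |(ξ^{(p+1)}(t) / (p+1)!) · Σ_{j=0}^{p} (−1)^j · (p choose j) · (−j)^{p+1}| + C ·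 τ², where P̄_l is the approximated Taylor polynomial of degree l at t with step τ. -/
section Aux
open fwdDiff Finset Set

lemma fwdDiff_iter_fun_zero {M G : Type*} [AddCommMonoid M] [AddCommGroup G] (h : M) (n : ℕ) :
    (fwdDiff h)^[n] (fun _ : M => (0 : G)) = fun _ => 0 := by
  induction n with
  | zero => rfl
  | succ n IH => rw [Function.iterate_succ_apply, fwdDiff_const, IH]

lemma fwdDiff_pow (q : ℕ) :
    fwdDiff (1:ℝ) (fun x : ℝ => x ^ q) = fun x => ∑ r ∈ range q, (q.choose r : ℝ) * x ^ r := by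
  funext x
  simp only [fwdDiff]
  rw [add_pow]
  rw [Finset.sum_range_succ]
  simp [mul_comm]

lemma fwdDiff_iter_pow (p q : ℕ) (hq : q ≤ p) :
    (fwdDiff (1:ℝ))^[p] (fun x : ℝ => x ^ q) = fun _ => if q = p then (p.factorial : ℝ) else 0 := by
  induction p generalizing q with
  | zero =>
    interval_cases q
    simp [Nat.factorial]
  | succ p IH =>
    rcases Nat.eq_zero_or_pos q with rfl | hq0
    · have h0 : (fun x : ℝ => x ^ 0) = fun _ : ℝ => (1:ℝ) := by funext x; simp
      rw [Function.iterate_succ_apply, h0, fwdDiff_const, fwdDiff_iter_fun_zero]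
      simp [Nat.succ_ne_zero]
    · rw [Function.iterate_succ_apply, fwdDiff_pow]
      have hsum : (fun x : ℝ => ∑ r ∈ range q, (q.choose r : ℝ) * x ^ r)
          = ∑ r ∈ range q, (q.choose r : ℝ) • (fun x : ℝ => x ^ r) := by
        funext x; simp [smul_eq_mul]
      rw [hsum, fwdDiff_iter_finset_sum]
      funext x
      rw [Finset.sum_apply]
      have hterm : ∀ r ∈ range q,
          ((fwdDiff (1:ℝ))^[p] ((q.choose r : ℝ) • fun x : ℝ => x ^ r)) x
            = if r = p then (q.choose r : ℝ) * (p.factorial : ℝ) else 0 := by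
        intro r hr
        rw [Finset.mem_range] at hr
        rw [fwdDiff_iter_const_smul, IH r (by omega : r ≤ p)]
        simp only [Pi.smul_apply, smul_eq_mul]
        split_ifs <;> simp
      rw [Finset.sum_congr rfl hterm, Finset.sum_ite_eq' (range q) p
        (fun r => (q.choose r : ℝ) * (p.factorial : ℝ))]
      rcases Nat.eq_or_lt_of_le hq with hq' | hq'
      · subst hq'
        rw [if_pos (Finset.mem_range.mpr (Nat.lt_succ_self p)), if_pos rfl,
          Nat.choose_succ_self_right, Nat.factorial_succ]
        push_cast
        ring
      · have hnp : p ∉ range q := by rw [Finset.mem_range]; omega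
        rw [if_neg hnp, if_neg (by omega)]

lemma key_sum (p q : ℕ) (hq : q ≤ p) :
    ∑ j ∈ Finset.range (p+1), (-1:ℝ)^j * (p.choose j : ℝ) * (-(j:ℝ))^q
      = if q = p then (p.factorial : ℝ) else 0 := by
  have h1 := congrFun (fwdDiff_iter_pow p q hq) (0:ℝ)
  rw [fwdDiff_iter_eq_sum_shift (1:ℝ) (fun x : ℝ => x ^ q) p 0] at h1
  have h2 : ∑ j ∈ Finset.range (p+1),
      (-1:ℝ)^(p-j) * (p.choose j : ℝ) * (j:ℝ)^q = if q = p then (p.factorial : ℝ) else 0 := by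
    rw [← h1]
    refine Finset.sum_congr rfl fun j hj => ?_
    simp only [zsmul_eq_mul, smul_eq_mul, zero_add, nsmul_eq_mul, mul_one, Int.cast_mul,
      Int.cast_pow, Int.cast_neg, Int.cast_one, Int.cast_natCast]
  have h3 : ∀ j ∈ Finset.range (p+1),
      (-1:ℝ)^j * (p.choose j : ℝ) * (-(j:ℝ))^q
        = ((-1:ℝ)^q * (-1:ℝ)^p) * ((-1:ℝ)^(p-j) * (p.choose j : ℝ) * (j:ℝ)^q) := by
    intro j hj
    rw [Finset.mem_range] at hj
    have hsign : (-1:ℝ)^p * (-1:ℝ)^(p-j) = (-1:ℝ)^j := by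
      rw [← pow_add]
      have : p + (p - j) = j + 2 * (p - j) := by omega
      rw [this, pow_add, pow_mul, neg_one_sq, one_pow, mul_one]
    rw [neg_pow (j:ℝ) q, ← hsign]
    ring
  rw [Finset.sum_congr rfl h3, ← Finset.mul_sum, h2]
  split_ifs with hqp
  · subst hqp
    rw [← pow_add]
    have : q + q = 2 * q := by omega
    rw [this, pow_mul, neg_one_sq, one_pow, one_mul]
  · rw [mul_zero]


lemma iteratedDerivWithin_subset_eq {f : ℝ → ℝ} {s u : Set ℝ}
    (hu : UniqueDiffOn ℝ u) (hs : UniqueDiffOn ℝ s) (hus : u ⊆ s) {N q : ℕ}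
    (hf : ContDiffOn ℝ (N : ℕ∞) f s) (hq : q ≤ N) {x : ℝ} (hx : x ∈ u) :
    iteratedDerivWithin q f u x = iteratedDerivWithin q f s x := by
  have h1 := ((hf.ftaylorSeriesWithin hs).mono hus).eq_iteratedFDerivWithin_of_uniqueDiffOn
    (m := q) (by exact_mod_cast hq) hu hx
  simp only [iteratedDerivWithin_eq_iteratedFDerivWithin, ← h1, ftaylorSeriesWithin]

lemma iteratedDerivWithin_comp_affine {f : ℝ → ℝ} {s u : Set ℝ}
    (hs : UniqueDiffOn ℝ s) (hu : UniqueDiffOn ℝ u) {a b : ℝ}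
    (hmap : ∀ x ∈ u, a * x + b ∈ s) {N : ℕ} (hf : ContDiffOn ℝ (N : ℕ∞) f s) :
    ∀ q ≤ N, ∀ x ∈ u, iteratedDerivWithin q (fun y => f (a * y + b)) u x
      = a ^ q * iteratedDerivWithin q f s (a * x + b) := by
  intro q
  induction q with
  | zero => intro _ x _; simp
  | succ q IH =>
    intro hqN x hx
    have hq' : q ≤ N := by omega
    rw [iteratedDerivWithin_succ]
    have hcongr : Set.EqOn (iteratedDerivWithin q (fun y => f (a * y + b)) u)
        (fun y => a ^ q * iteratedDerivWithin q f s (a * y + b)) u := by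
      intro y hy
      exact IH hq' y hy
    rw [derivWithin_congr hcongr (IH hq' x hx)]
    have hgdiff : DifferentiableOn ℝ (iteratedDerivWithin q f s) s :=
      hf.differentiableOn_iteratedDerivWithin (by exact_mod_cast Nat.lt_of_lt_of_le q.lt_succ_self hqN) hs
    have hinner : HasDerivWithinAt (fun y : ℝ => a * y + b) a u x := by
      simpa using (((hasDerivAt_id x).const_mul a).add_const b).hasDerivWithinAt
    have hg : HasDerivWithinAt (iteratedDerivWithin q f s)
        (iteratedDerivWithin (q+1) f s (a * x + b)) s (a * x + b) := by
      have := (hgdiff (a * x + b) (hmap x hx)).hasDerivWithinAt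
      rwa [← iteratedDerivWithin_succ] at this
    have hcomp : HasDerivWithinAt (fun y => iteratedDerivWithin q f s (a * y + b))
        (iteratedDerivWithin (q+1) f s (a * x + b) * a) u x :=
      by have := HasDerivWithinAt.comp x hg hinner (fun y hy => hmap y hy); exact this
    have : HasDerivWithinAt (fun y => a ^ q * iteratedDerivWithin q f s (a * y + b))
        (a ^ q * (iteratedDerivWithin (q+1) f s (a * x + b) * a)) u x := hcomp.const_mul _
    rw [this.derivWithin (hu.uniqueDiffWithinAt hx)]
    ring

lemma bd_step (l m p : ℕ) (hl : 1 ≤ l) (hm : 1 ≤ m) (hp1 : 1 ≤ p) (hpl : p ≤ l)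
    (t τ₀ τ M : ℝ) (hτ₀ : 0 < τ₀) (hτ : 0 < τ) (hττ₀ : τ ≤ τ₀) (hM : 0 ≤ M)
    (ξ : ℝ → ℝ)
    (hξ : ContDiffOn ℝ ((l + 2 : ℕ) : ℕ∞) ξ (Set.Icc (t - l * τ₀) (t + m * τ₀)))
    (hMb : ∀ q, q ≤ l + 2 → ∀ s ∈ Set.Icc (t - l * τ₀) (t + m * τ₀),
      |iteratedDerivWithin q ξ (Set.Icc (t - l * τ₀) (t + m * τ₀)) s| ≤ M) :
    |bdApprox ξ τ p t - iteratedDerivWithin p ξ (Set.Icc (t - l * τ₀) (t + m * τ₀)) t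
        - τ * (iteratedDerivWithin (p + 1) ξ (Set.Icc (t - l * τ₀) (t + m * τ₀)) t
            / ((p + 1).factorial : ℝ) *
          ∑ j ∈ Finset.range (p + 1), (-1 : ℝ) ^ j * (p.choose j : ℝ) * (-(j : ℝ)) ^ (p + 1))|
      ≤ (M * ∑ j ∈ Finset.range (p + 1), (p.choose j : ℝ) * (j : ℝ) ^ (p + 2))
          / ((p + 1).factorial : ℝ) * τ ^ 2 := by
  have hl0 : (0:ℝ) < l * τ₀ := by
    have : (1:ℝ) ≤ l := by exact_mod_cast hl
    nlinarith
  have hm0 : (0:ℝ) < m * τ₀ := by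
    have : (1:ℝ) ≤ m := by exact_mod_cast hm
    nlinarith
  set S : Set ℝ := Set.Icc (t - l * τ₀) (t + m * τ₀) with hS
  set U : Set ℝ := Set.Icc t (t + l * τ₀) with hU
  have hSud : UniqueDiffOn ℝ S := uniqueDiffOn_Icc (by linarith)
  have hUud : UniqueDiffOn ℝ U := uniqueDiffOn_Icc (by linarith)
  have hmapsU : ∀ y ∈ U, -1 * y + 2 * t ∈ S := by
    rintro y ⟨h1, h2⟩
    exact ⟨by linarith, by linarith⟩
  set η : ℝ → ℝ := fun y => ξ (-1 * y + 2 * t) with hη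
  have haff : ContDiff ℝ ((l + 2 : ℕ) : ℕ∞) (fun y : ℝ => -1 * y + 2 * t) :=
    by fun_prop
  have hηcd : ContDiffOn ℝ ((l + 2 : ℕ) : ℕ∞) η U :=
    hξ.comp haff.contDiffOn hmapsU
  have hder : ∀ q, q ≤ l + 2 → ∀ y ∈ U, iteratedDerivWithin q η U y
      = (-1 : ℝ) ^ q * iteratedDerivWithin q ξ S (-1 * y + 2 * t) :=
    iteratedDerivWithin_comp_affine hSud hUud hmapsU hξ
  have htU : t ∈ U := ⟨le_refl t, by linarith⟩
  have hteq : -1 * t + 2 * t = t := by ring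
  -- coefficients
  set D : ℕ → ℝ := fun q => iteratedDerivWithin q ξ S t with hD
  -- the Taylor bound for each j
  have hp2l2 : p + 2 ≤ l + 2 := by omega
  have hηbd : ∀ y ∈ U, ‖iteratedDerivWithin (p + 2) η U y‖ ≤ M := by
    intro y hy
    rw [Real.norm_eq_abs, hder (p + 2) hp2l2 y hy, abs_mul, abs_pow, abs_neg, abs_one, one_pow,
      one_mul]
    exact hMb (p + 2) hp2l2 _ (hmapsU y hy)
  have hηcd' : ContDiffOn ℝ ((p + 1 + 1 : ℕ) : ℕ∞) η U := by
    apply hηcd.of_le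
    exact_mod_cast (by omega : p + 1 + 1 ≤ l + 2)
  have hjmem : ∀ j ∈ Finset.range (p + 1), t + j * τ ∈ U := by
    intro j hj
    rw [Finset.mem_range] at hj
    have hjp : (j : ℝ) ≤ (l : ℝ) := by exact_mod_cast (by omega : j ≤ l)
    constructor
    · nlinarith
    · nlinarith
  have htaylor : ∀ j ∈ Finset.range (p + 1),
      ‖η (t + j * τ) - taylorWithinEval η (p + 1) U t (t + j * τ)‖
        ≤ M * (j * τ) ^ (p + 2) / ((p + 1).factorial : ℝ) := by
    intro j hj
    have := taylor_mean_remainder_bound (f := η) (a := t) (b := t + l * τ₀)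
      (x := t + j * τ) (n := p + 1) (by linarith) hηcd' (hjmem j hj) hηbd
    simpa using this
  set c : ℕ → ℝ := fun j => (-1 : ℝ) ^ j * (p.choose j : ℝ) with hc
  set A : ℝ := ∑ j ∈ Finset.range (p + 1), c j * (-(j : ℝ)) ^ (p + 1) with hA
  have hfacne : ∀ q : ℕ, (q.factorial : ℝ) ≠ 0 :=
    fun q => Nat.cast_ne_zero.mpr q.factorial_ne_zero
  have hTj : ∀ j ∈ Finset.range (p + 1), taylorWithinEval η (p + 1) U t (t + j * τ)
      = ∑ q ∈ Finset.range (p + 2), (D q / (q.factorial : ℝ)) * ((-(j : ℝ)) * τ) ^ q := by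
    intro j hj
    rw [taylor_within_apply]
    refine Finset.sum_congr rfl fun q hq => ?_
    rw [Finset.mem_range] at hq
    rw [hder q (by omega) t htU, hteq]
    have h1 : t + (j : ℝ) * τ - t = (j : ℝ) * τ := by ring
    have h2 : (-(j : ℝ)) * τ = -((j : ℝ) * τ) := by ring
    rw [h1, h2, neg_pow ((j : ℝ) * τ) q, smul_eq_mul]
    field_simp [hfacne]
    try ring
  set e : ℝ := D (p + 1) / ((p + 1).factorial : ℝ) * A with he
  have hmain : ∑ j ∈ Finset.range (p + 1),
        c j * (∑ q ∈ Finset.range (p + 2), (D q / (q.factorial : ℝ)) * ((-(j : ℝ)) * τ) ^ q)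
      = D p * τ ^ p + e * τ ^ (p + 1) := by
    have h1 : ∀ j ∈ Finset.range (p + 1),
        c j * (∑ q ∈ Finset.range (p + 2), (D q / (q.factorial : ℝ)) * ((-(j : ℝ)) * τ) ^ q)
          = ∑ q ∈ Finset.range (p + 2),
              (D q / (q.factorial : ℝ) * τ ^ q) * (c j * (-(j : ℝ)) ^ q) := by
      intro j _
      rw [Finset.mul_sum]
      refine Finset.sum_congr rfl fun q _ => ?_
      rw [mul_pow]
      ring
    rw [Finset.sum_congr rfl h1, Finset.sum_comm]
    have h2 : ∀ q ∈ Finset.range (p + 2),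
        ∑ j ∈ Finset.range (p + 1), (D q / (q.factorial : ℝ) * τ ^ q) * (c j * (-(j : ℝ)) ^ q)
          = (D q / (q.factorial : ℝ) * τ ^ q) * ∑ j ∈ Finset.range (p + 1), c j * (-(j : ℝ)) ^ q := by
      intro q _
      rw [Finset.mul_sum]
    rw [Finset.sum_congr rfl h2, Finset.sum_range_succ]
    have h3 : ∀ q ∈ Finset.range (p + 1),
        (D q / (q.factorial : ℝ) * τ ^ q) * ∑ j ∈ Finset.range (p + 1), c j * (-(j : ℝ)) ^ q
          = if q = p then (D q / (q.factorial : ℝ) * τ ^ q) * (p.factorial : ℝ) else 0 := by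
      intro q hq
      rw [Finset.mem_range] at hq
      have : ∑ j ∈ Finset.range (p + 1), c j * (-(j : ℝ)) ^ q
          = if q = p then (p.factorial : ℝ) else 0 := by
        rw [← key_sum p q (by omega)]
      rw [this]
      split_ifs <;> simp
    rw [Finset.sum_congr rfl h3, Finset.sum_ite_eq' (Finset.range (p + 1)) p
      (fun q => (D q / (q.factorial : ℝ) * τ ^ q) * (p.factorial : ℝ)),
      if_pos (Finset.mem_range.mpr p.lt_succ_self)]
    have h4 : ∑ j ∈ Finset.range (p + 1), c j * (-(j : ℝ)) ^ (p + 1) = A := rfl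
    rw [h4, he, mul_right_comm (D p / (p.factorial : ℝ)) (τ ^ p) (p.factorial : ℝ),
      div_mul_cancel₀ _ (hfacne p)]
    ring
  -- split the sum into main part and remainder
  set R : ℝ := ∑ j ∈ Finset.range (p + 1),
      c j * (η (t + j * τ) - taylorWithinEval η (p + 1) U t (t + j * τ)) with hR
  have hξη : ∀ j : ℕ, ξ (t - (j : ℝ) * τ) = η (t + j * τ) := by
    intro j
    show ξ (t - (j : ℝ) * τ) = ξ (-1 * (t + (j : ℝ) * τ) + 2 * t)
    congr 1
    ring
  have hsplit : ∑ j ∈ Finset.range (p + 1), c j * ξ (t - j * τ)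
      = (D p * τ ^ p + e * τ ^ (p + 1)) + R := by
    rw [← hmain, hR, ← Finset.sum_add_distrib]
    refine Finset.sum_congr rfl fun j hj => ?_
    rw [hξη j, hTj j hj]
    ring
  set K : ℝ := (M * ∑ j ∈ Finset.range (p + 1), (p.choose j : ℝ) * (j : ℝ) ^ (p + 2))
      / ((p + 1).factorial : ℝ) with hK
  have hK0 : 0 ≤ K := by
    apply div_nonneg _ (by positivity)
    apply mul_nonneg hM
    apply Finset.sum_nonneg
    intro j _
    positivity
  have hRbound : |R| ≤ K * τ ^ (p + 2) := by
    calc |R| ≤ ∑ j ∈ Finset.range (p + 1),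
        |c j * (η (t + j * τ) - taylorWithinEval η (p + 1) U t (t + j * τ))| :=
          Finset.abs_sum_le_sum_abs _ _
    _ ≤ ∑ j ∈ Finset.range (p + 1),
        (p.choose j : ℝ) * (M * ((j : ℝ) ^ (p + 2) * τ ^ (p + 2)) / ((p + 1).factorial : ℝ)) := by
        refine Finset.sum_le_sum fun j hj => ?_
        rw [abs_mul, hc]
        have hcabs : |(-1 : ℝ) ^ j * (p.choose j : ℝ)| = (p.choose j : ℝ) := by
          rw [abs_mul, abs_pow, abs_neg, abs_one, one_pow, one_mul, abs_of_nonneg (by positivity)]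
        rw [hcabs]
        refine mul_le_mul_of_nonneg_left ?_ (by positivity)
        have := htaylor j hj
        rw [Real.norm_eq_abs] at this
        calc |η (t + j * τ) - taylorWithinEval η (p + 1) U t (t + j * τ)|
            ≤ M * ((j : ℝ) * τ) ^ (p + 2) / ((p + 1).factorial : ℝ) := this
        _ = M * ((j : ℝ) ^ (p + 2) * τ ^ (p + 2)) / ((p + 1).factorial : ℝ) := by
            rw [mul_pow]
    _ = K * τ ^ (p + 2) := by
        rw [hK]
        symm
        rw [Finset.mul_sum, Finset.sum_div, Finset.sum_mul]
        refine Finset.sum_congr rfl fun j _ => ?_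
        field_simp [hfacne]
        try ring
  -- final computation
  have hτp : (0 : ℝ) < τ ^ p := pow_pos hτ p
  have hbd : bdApprox ξ τ p t - D p - τ * e = (τ ^ p)⁻¹ * R := by
    have hbd1 : bdApprox ξ τ p t
        = (τ ^ p)⁻¹ * ∑ j ∈ Finset.range (p + 1), c j * ξ (t - j * τ) := by
      rw [bdApprox, zpow_neg, zpow_natCast]
    rw [hbd1, hsplit]
    field_simp
    ring
  rw [hbd, abs_mul, abs_inv, abs_of_pos hτp]
  calc (τ ^ p)⁻¹ * |R| ≤ (τ ^ p)⁻¹ * (K * τ ^ (p + 2)) := by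
        exact mul_le_mul_of_nonneg_left hRbound (by positivity)
  _ = K * τ ^ 2 := by
      rw [pow_add]
      field_simp
      try ring


end Aux

open Set

/-- Paper's Theorem 2 (prediction error bound): the error of the approximated
Taylor polynomial prediction at `t + mτ` is bounded by the Taylor remainder of
order `(mτ)^{l+1}`, plus an explicit first-order term in `τ`, plus an `O(τ²)`
remainder, uniformly for `τ ∈ (0, τ₀]`. -/
theorem prediction_error_bound (l m : ℕ) (hl : 1 ≤ l) (hm : 1 ≤ m)
    (t τ₀ : ℝ) (hτ₀ : 0 < τ₀) (hmτ₀ : (m : ℝ) * τ₀ ≤ 1) (ξ : ℝ → ℝ)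
    (hξ : ContDiffOn ℝ (l + 2) ξ (Set.Icc (t - l * τ₀) (t + m * τ₀)))
    (B : ℝ) (hB : 0 ≤ B)
    (hbound : ∀ s ∈ Set.Icc t (t + m * τ₀),
      |iteratedDerivWithin (l + 1) ξ (Set.Icc (t - l * τ₀) (t + m * τ₀)) s| ≤ B) :
    ∃ C : ℝ, 0 ≤ C ∧ ∀ τ ∈ Set.Ioc (0 : ℝ) τ₀,
      |ξ (t + m * τ)
          - (ξ t + ∑ p ∈ Finset.Icc 1 l,
              bdApprox ξ τ p t / (p.factorial : ℝ) * ((m : ℝ) * τ) ^ p)|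
        ≤ B / ((l + 1).factorial : ℝ) * ((m : ℝ) * τ) ^ (l + 1)
          + τ * ∑ p ∈ Finset.Icc 1 l,
              |iteratedDerivWithin (p + 1) ξ (Set.Icc (t - l * τ₀) (t + m * τ₀)) t
                  / ((p + 1).factorial : ℝ) *
                ∑ j ∈ Finset.range (p + 1),
                  (-1 : ℝ) ^ j * (p.choose j : ℝ) * (-(j : ℝ)) ^ (p + 1)|
          + C * τ ^ 2 := by
  have hl' : (1:ℝ) ≤ l := by exact_mod_cast hl
  have hm' : (1:ℝ) ≤ m := by exact_mod_cast hm
  have hl0 : (0:ℝ) < l * τ₀ := by nlinarith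
  have hm0 : (0:ℝ) < m * τ₀ := by nlinarith
  set S : Set ℝ := Set.Icc (t - l * τ₀) (t + m * τ₀) with hSdef
  have hξ' : ContDiffOn ℝ ((l + 2 : ℕ) : ℕ∞) ξ S := by exact_mod_cast hξ
  have hSud : UniqueDiffOn ℝ S := uniqueDiffOn_Icc (by linarith)
  -- a uniform bound on all iterated derivatives of order ≤ l + 2 on S
  obtain ⟨M, hM0, hMb⟩ : ∃ M, 0 ≤ M ∧ ∀ q, q ≤ l + 2 → ∀ s ∈ S,
      |iteratedDerivWithin q ξ S s| ≤ M := by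
    have hcont : ContinuousOn
        (fun s => ∑ q ∈ Finset.range (l + 3), |iteratedDerivWithin q ξ S s|) S := by
      apply continuousOn_finset_sum
      intro q hq
      rw [Finset.mem_range] at hq
      exact (hξ'.continuousOn_iteratedDerivWithin
        (by exact_mod_cast (by omega : q ≤ l + 2)) hSud).abs
    obtain ⟨M, hM⟩ := IsCompact.exists_bound_of_continuousOn isCompact_Icc hcont
    refine ⟨max M 0, le_max_right _ _, fun q hq s hs => ?_⟩
    have h1 : |iteratedDerivWithin q ξ S s|
        ≤ ∑ q' ∈ Finset.range (l + 3), |iteratedDerivWithin q' ξ S s| :=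
      Finset.single_le_sum (f := fun q' => |iteratedDerivWithin q' ξ S s|)
        (fun i _ => abs_nonneg _) (Finset.mem_range.mpr (by omega))
    have h2 := hM s hs
    rw [Real.norm_eq_abs] at h2
    have h3 := le_abs_self (∑ q' ∈ Finset.range (l + 3), |iteratedDerivWithin q' ξ S s|)
    have := le_max_left M 0
    linarith
  refine ⟨∑ p ∈ Finset.Icc 1 l,
      (M * ∑ j ∈ Finset.range (p + 1), (p.choose j : ℝ) * (j : ℝ) ^ (p + 2))
        / ((p + 1).factorial : ℝ), ?_, ?_⟩
  · apply Finset.sum_nonneg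
    intro p _
    apply div_nonneg _ (by positivity)
    apply mul_nonneg hM0
    exact Finset.sum_nonneg fun j _ => by positivity
  rintro τ ⟨hτ, hττ₀⟩
  have hmτ : (0:ℝ) < m * τ := by nlinarith
  have hmττ₀ : (m:ℝ) * τ ≤ m * τ₀ := by nlinarith
  have hmτ1 : (m:ℝ) * τ ≤ 1 := le_trans hmττ₀ hmτ₀
  -- Step 1: the Taylor remainder bound
  set V : Set ℝ := Set.Icc t (t + m * τ) with hVdef
  have hV : t < t + m * τ := by linarith
  have hVsub : V ⊆ S := Icc_subset_Icc (by linarith) (by linarith)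
  have hVud : UniqueDiffOn ℝ V := uniqueDiffOn_Icc hV
  have hcdV : ContDiffOn ℝ ((l + 2 : ℕ) : ℕ∞) ξ V := hξ'.mono hVsub
  have hcdVl : ContDiffOn ℝ (l : ℕ∞) ξ V :=
    hcdV.of_le (by exact_mod_cast (by omega : l ≤ l + 2))
  have hdiff : DifferentiableOn ℝ (iteratedDerivWithin l ξ V) (Ioo t (t + m * τ)) :=
    (hcdV.differentiableOn_iteratedDerivWithin
      (by exact_mod_cast (by omega : l < l + 2)) hVud).mono Ioo_subset_Icc_self
  obtain ⟨x', hx', hTay⟩ := taylor_mean_remainder_lagrange (n := l) hV.ne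
    (by rw [Set.uIcc_of_le hV.le, ← hVdef]; exact_mod_cast hcdVl)
    (by rw [Set.uIcc_of_le hV.le, ← hVdef, Set.uIoo_of_le hV.le]; exact hdiff)
  rw [Set.uIoo_of_le hV.le] at hx'
  rw [Set.uIcc_of_le hV.le, ← hVdef] at hTay
  have htV : t ∈ V := ⟨le_refl t, le_of_lt hV⟩
  have hconv : ∀ q, q ≤ l + 2 → ∀ x ∈ V,
      iteratedDerivWithin q ξ V x = iteratedDerivWithin q ξ S x := fun q hq x hx =>
    iteratedDerivWithin_subset_eq hVud hSud hVsub hξ' hq hx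
  have hTayEval : taylorWithinEval ξ l V t (t + m * τ)
      = ∑ q ∈ Finset.range (l + 1),
          iteratedDerivWithin q ξ S t / (q.factorial : ℝ) * ((m : ℝ) * τ) ^ q := by
    rw [taylor_within_apply]
    refine Finset.sum_congr rfl fun q hq => ?_
    rw [Finset.mem_range] at hq
    rw [hconv q (by omega) t htV, smul_eq_mul]
    have h5 : t + (m:ℝ) * τ - t = (m:ℝ) * τ := by ring
    rw [h5]
    ring
  have hrem : |ξ (t + m * τ) - ∑ q ∈ Finset.range (l + 1),
        iteratedDerivWithin q ξ S t / (q.factorial : ℝ) * ((m : ℝ) * τ) ^ q|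
      ≤ B / ((l + 1).factorial : ℝ) * ((m : ℝ) * τ) ^ (l + 1) := by
    rw [← hTayEval]
    rw [hTay]
    have hx'V : x' ∈ V := Ioo_subset_Icc_self hx'
    rw [hconv (l + 1) (by omega) x' hx'V]
    have hx'mem : x' ∈ Set.Icc t (t + m * τ₀) :=
      ⟨le_of_lt hx'.1, le_trans (le_of_lt hx'.2) (by linarith)⟩
    have hx'B := hbound x' hx'mem
    have h5 : t + (m:ℝ) * τ - t = (m:ℝ) * τ := by ring
    rw [h5, abs_div, abs_mul, abs_pow, abs_of_pos hmτ, Nat.abs_cast]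
    have hfpos : (0:ℝ) < ((l + 1).factorial : ℝ) := by positivity
    calc |iteratedDerivWithin (l + 1) ξ S x'| * ((m:ℝ) * τ) ^ (l + 1) / ((l + 1).factorial : ℝ)
        ≤ B * ((m:ℝ) * τ) ^ (l + 1) / ((l + 1).factorial : ℝ) := by gcongr
      _ = B / ((l + 1).factorial : ℝ) * ((m:ℝ) * τ) ^ (l + 1) := by ring
  -- Step 3 : expansion of the backward differences
  have hstep : ∀ p ∈ Finset.Icc 1 l,
      |bdApprox ξ τ p t - iteratedDerivWithin p ξ S t
          - τ * (iteratedDerivWithin (p + 1) ξ S t / ((p + 1).factorial : ℝ) *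
              ∑ j ∈ Finset.range (p + 1), (-1:ℝ)^j * (p.choose j : ℝ) * (-(j:ℝ))^(p+1))|
        ≤ (M * ∑ j ∈ Finset.range (p + 1), (p.choose j : ℝ) * (j:ℝ)^(p+2))
            / ((p + 1).factorial : ℝ) * τ^2 := by
    intro p hp
    rw [Finset.mem_Icc] at hp
    exact bd_step l m p hl hm hp.1 hp.2 t τ₀ τ M hτ₀ hτ hττ₀ hM0 ξ hξ' hMb
  -- decomposition of the error
  set T : ℝ := ∑ q ∈ Finset.range (l + 1),
      iteratedDerivWithin q ξ S t / (q.factorial : ℝ) * ((m:ℝ) * τ) ^ q with hT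
  have hTsplit : T = ξ t + ∑ p ∈ Finset.Icc 1 l,
      iteratedDerivWithin p ξ S t / (p.factorial : ℝ) * ((m:ℝ) * τ) ^ p := by
    rw [hT, Finset.sum_range_succ']
    have hz : iteratedDerivWithin 0 ξ S t / ((Nat.factorial 0 : ℕ) : ℝ) * ((m:ℝ) * τ) ^ 0
        = ξ t := by
      simp [iteratedDerivWithin_zero]
    rw [hz, add_comm]
    congr 1
    rw [← Finset.Ico_add_one_right_eq_Icc, Finset.sum_Ico_eq_sum_range]
    exact Finset.sum_congr rfl fun i _ => by rw [Nat.add_comm i 1]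
  have hsplit2 : ξ (t + m * τ) - (ξ t + ∑ p ∈ Finset.Icc 1 l,
        bdApprox ξ τ p t / (p.factorial : ℝ) * ((m:ℝ) * τ) ^ p)
      = (ξ (t + m * τ) - T) + ∑ p ∈ Finset.Icc 1 l,
          (iteratedDerivWithin p ξ S t - bdApprox ξ τ p t)
            * (((m:ℝ) * τ) ^ p / (p.factorial : ℝ)) := by
    have h6 : ∀ p ∈ Finset.Icc 1 l,
        (iteratedDerivWithin p ξ S t - bdApprox ξ τ p t)
            * (((m:ℝ) * τ) ^ p / (p.factorial : ℝ))
          = iteratedDerivWithin p ξ S t / (p.factorial : ℝ) * ((m:ℝ) * τ) ^ p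
            - bdApprox ξ τ p t / (p.factorial : ℝ) * ((m:ℝ) * τ) ^ p :=
      fun p _ => by ring
    rw [Finset.sum_congr rfl h6, Finset.sum_sub_distrib, hTsplit]
    ring
  -- per-term bound
  have hone : ∀ p ∈ Finset.Icc 1 l,
      |(iteratedDerivWithin p ξ S t - bdApprox ξ τ p t)
          * (((m:ℝ) * τ) ^ p / (p.factorial : ℝ))|
        ≤ τ * |iteratedDerivWithin (p + 1) ξ S t / ((p + 1).factorial : ℝ) *
              ∑ j ∈ Finset.range (p + 1), (-1:ℝ)^j * (p.choose j : ℝ) * (-(j:ℝ))^(p+1)|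
          + (M * ∑ j ∈ Finset.range (p + 1), (p.choose j : ℝ) * (j:ℝ)^(p+2))
              / ((p + 1).factorial : ℝ) * τ^2 := by
    intro p hp
    have h1 := hstep p hp
    set Ep : ℝ := iteratedDerivWithin (p + 1) ξ S t / ((p + 1).factorial : ℝ) *
        ∑ j ∈ Finset.range (p + 1), (-1:ℝ)^j * (p.choose j : ℝ) * (-(j:ℝ))^(p+1) with hEp
    set Kp : ℝ := (M * ∑ j ∈ Finset.range (p + 1), (p.choose j : ℝ) * (j:ℝ)^(p+2))
        / ((p + 1).factorial : ℝ) with hKp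
    have hKp0 : 0 ≤ Kp := by
      rw [hKp]
      apply div_nonneg _ (by positivity)
      apply mul_nonneg hM0
      exact Finset.sum_nonneg fun j _ => by positivity
    have hfge1 : (1:ℝ) ≤ (p.factorial : ℝ) := by exact_mod_cast p.factorial_pos
    have hXle : ((m:ℝ) * τ) ^ p ≤ 1 := pow_le_one₀ (le_of_lt hmτ) hmτ1
    have hu0 : 0 ≤ ((m:ℝ) * τ) ^ p / (p.factorial : ℝ) := by positivity
    have hu1 : ((m:ℝ) * τ) ^ p / (p.factorial : ℝ) ≤ 1 := by
      rw [div_le_one (by positivity)]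
      exact le_trans hXle hfge1
    rw [abs_mul, abs_of_nonneg hu0]
    have h2 : |iteratedDerivWithin p ξ S t - bdApprox ξ τ p t| ≤ Kp * τ^2 + τ * |Ep| := by
      have h3 : iteratedDerivWithin p ξ S t - bdApprox ξ τ p t
          = (-(bdApprox ξ τ p t - iteratedDerivWithin p ξ S t - τ * Ep)) + (-(τ * Ep)) := by
        ring
      rw [h3]
      refine le_trans (abs_add_le _ _) ?_
      rw [abs_neg, abs_neg, abs_mul, abs_of_pos hτ]
      exact add_le_add h1 (le_refl _)
    calc |iteratedDerivWithin p ξ S t - bdApprox ξ τ p t|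
          * (((m:ℝ) * τ) ^ p / (p.factorial : ℝ))
        ≤ (Kp * τ^2 + τ * |Ep|) * (((m:ℝ) * τ) ^ p / (p.factorial : ℝ)) :=
          mul_le_mul_of_nonneg_right h2 hu0
      _ ≤ (Kp * τ^2 + τ * |Ep|) * 1 := by
          apply mul_le_mul_of_nonneg_left hu1
          positivity
      _ = τ * |Ep| + Kp * τ^2 := by ring
  -- final assembly
  rw [hsplit2]
  calc |(ξ (t + m * τ) - T) + ∑ p ∈ Finset.Icc 1 l,
        (iteratedDerivWithin p ξ S t - bdApprox ξ τ p t)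
          * (((m:ℝ) * τ) ^ p / (p.factorial : ℝ))|
      ≤ |ξ (t + m * τ) - T| + |∑ p ∈ Finset.Icc 1 l,
          (iteratedDerivWithin p ξ S t - bdApprox ξ τ p t)
            * (((m:ℝ) * τ) ^ p / (p.factorial : ℝ))| := abs_add_le _ _
    _ ≤ B / ((l + 1).factorial : ℝ) * ((m:ℝ) * τ) ^ (l + 1)
        + ∑ p ∈ Finset.Icc 1 l,
            |(iteratedDerivWithin p ξ S t - bdApprox ξ τ p t)
              * (((m:ℝ) * τ) ^ p / (p.factorial : ℝ))| :=
        add_le_add hrem (Finset.abs_sum_le_sum_abs _ _)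
    _ ≤ B / ((l + 1).factorial : ℝ) * ((m:ℝ) * τ) ^ (l + 1)
        + ∑ p ∈ Finset.Icc 1 l,
            (τ * |iteratedDerivWithin (p + 1) ξ S t / ((p + 1).factorial : ℝ) *
                ∑ j ∈ Finset.range (p + 1), (-1:ℝ)^j * (p.choose j : ℝ) * (-(j:ℝ))^(p+1)|
              + (M * ∑ j ∈ Finset.range (p + 1), (p.choose j : ℝ) * (j:ℝ)^(p+2))
                  / ((p + 1).factorial : ℝ) * τ^2) :=
        add_le_add (le_refl _) (Finset.sum_le_sum hone)
    _ = B / ((l + 1).factorial : ℝ) * ((m:ℝ) * τ) ^ (l + 1)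
        + τ * ∑ p ∈ Finset.Icc 1 l,
            |iteratedDerivWithin (p + 1) ξ S t / ((p + 1).factorial : ℝ) *
              ∑ j ∈ Finset.range (p + 1), (-1:ℝ)^j * (p.choose j : ℝ) * (-(j:ℝ))^(p+1)|
        + (∑ p ∈ Finset.Icc 1 l,
            (M * ∑ j ∈ Finset.range (p + 1), (p.choose j : ℝ) * (j:ℝ)^(p+2))
              / ((p + 1).factorial : ℝ)) * τ^2 := by
        rw [Finset.sum_add_distrib, Finset.mul_sum, Finset.sum_mul]
        ring
end
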